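/- arXiv:2605.15732 — 3 statements merged into one kernel-verified Lean document; each statement's English description precedes it below -/
import Mathlib

section
/- In the Hilbert-style system GR, the formula ■A ⊃ □□A is derivable for every formula A. -/
/-- Formulas of the bimodal logic GR: propositional variables, ⊥, ¬, ∧,
Gödel box `box` (□) and Rosser box `rbox` (■). -/
inductive GRFormula : Type
  | var : Nat → GRFormula
  | bot : GRFormula
  | neg : GRFormula → GRFormula
  | and : GRFormula → GRFormula → GRFormula
  | box : GRFormula → GRFormula
  | rbox : GRFormula → GRFormula

namespace GRFormula

/-- A ⊃ B defined as ¬(A ∧ ¬B). -/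
def impl (A B : GRFormula) : GRFormula := neg (and A (neg B))

/-- A ∨ B defined as ¬(¬A ∧ ¬B). -/
def or (A B : GRFormula) : GRFormula := neg (and (neg A) (neg B))

/-- ◇A := ¬□¬A. -/
def dia (A : GRFormula) : GRFormula := neg (box (neg A))

/-- A ≡ B := (A ⊃ B) ∧ (B ⊃ A). -/
def iff (A B : GRFormula) : GRFormula := and (impl A B) (impl B A)

/-- ⊤ := ¬⊥. -/
def top : GRFormula := neg bot

/-- Propositional tautology: true under every boolean valuation that
respects ⊥, ¬, ∧ (treating modal formulas as atoms). -/
def IsTaut (A : GRFormula) : Prop :=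
  ∀ v : GRFormula → Bool,
    v bot = false →
    (∀ B, v (neg B) = !v B) →
    (∀ B C, v (and B C) = (v B && v C)) →
    v A = true

end GRFormula

open GRFormula

/-- Hilbert-style derivability in the bimodal logic GR. -/
inductive GRProof : GRFormula → Prop
  | taut {A} : IsTaut A → GRProof A
  | axK (A B) : GRProof (impl (box (impl A B)) (impl (box A) (box B)))
  | axLob (A) : GRProof (impl (box (impl (box A) A)) (box A))
  | axRG (A) : GRProof (impl (rbox A) (box A))
  | axGGR (A) : GRProof (impl (box A) (box (rbox A)))
  | axGR (A) : GRProof (impl (box A) (or (box bot) (rbox A)))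
  | axDia (A) : GRProof (impl (dia (rbox A)) (dia A))
  | mp {A B} : GRProof (impl A B) → GRProof A → GRProof B
  | nec {A} : GRProof A → GRProof (box A)
  | conec {A} : GRProof (box A) → GRProof A

lemma taut_syl (P Q R : GRFormula) :
    IsTaut (impl (impl P Q) (impl (impl Q R) (impl P R))) := by
  intro v hbot hneg hand
  simp only [GRFormula.impl, hneg, hand]
  cases v P <;> cases v Q <;> cases v R <;> simp

theorem gr_rbox_imp_boxbox (A : GRFormula) :
    GRProof (impl (rbox A) (box (box A))) := by
  have h1 : GRProof (impl (rbox A) (box A)) := GRProof.axRG A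
  have h2 : GRProof (impl (box A) (box (rbox A))) := GRProof.axGGR A
  have h3 : GRProof (impl (box (rbox A)) (box (box A))) :=
    GRProof.mp (GRProof.axK (rbox A) (box A)) (GRProof.nec (GRProof.axRG A))
  have syl : ∀ P Q R, GRProof (impl P Q) → GRProof (impl Q R) → GRProof (impl P R) := by
    intro P Q R hpq hqr
    exact GRProof.mp (GRProof.mp (GRProof.taut (taut_syl P Q R)) hpq) hqr
  exact syl _ _ _ (syl _ _ _ h1 h2) h3
end

section
/- Define a hypersequent-style notion of validity: for sequents Γ → Δ interpret f(Γ → Δ) = ⋀Γ ⊃ ⋁Δ and for Γ ⇒ Δ interpret f(Γ ⇒ Δ) = □(⋀Γ ⊃ ⋁Δ), and for a hypersequent take the disjunction of the images. Then the formula image of the 'merge' rule is sound for GR: if the GR Hilbert system derives f(H | Γ ≫ Δ | Θ ≫ Π), then it derives f(H | Γ,Θ ≫ Δ,Π), where ≫ is uniformly → or ⇒. -/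
open GRFormula

/-- A sequent: `arrow = false` is a `→`-sequent, `arrow = true` a `⇒`-sequent.
The antecedent and succedent are finite multisets of formulas, represented
as lists. -/
structure GRSequent : Type where
  modal : Bool
  ant : List GRFormula
  suc : List GRFormula

/-- ⋀Γ, with ⋀∅ := ⊤. -/
def bigAnd : List GRFormula → GRFormula
  | [] => GRFormula.top
  | [A] => A
  | A :: l => GRFormula.and A (bigAnd l)

/-- ⋁Δ, with ⋁∅ := ⊥. -/
def bigOr : List GRFormula → GRFormula
  | [] => GRFormula.bot
  | [A] => A
  | A :: l => GRFormula.or A (bigOr l)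

/-- Formula image of a sequent. -/
def GRSequent.f (S : GRSequent) : GRFormula :=
  if S.modal then box (impl (bigAnd S.ant) (bigOr S.suc))
  else impl (bigAnd S.ant) (bigOr S.suc)

/-- Formula image of a hypersequent (a list of sequents). -/
def hyperF : List GRSequent → GRFormula
  | [] => GRFormula.bot
  | [S] => S.f
  | S :: l => GRFormula.or S.f (hyperF l)

namespace GRMergeAux

open GRFormula

lemma val_bigAnd (v : GRFormula → Bool) (hb : v bot = false)
    (hn : ∀ B, v (neg B) = !v B) (ha : ∀ B C, v (and B C) = (v B && v C)) :
    ∀ l, v (bigAnd l) = l.all (fun A => v A)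
  | [] => by simp [bigAnd, GRFormula.top, hn, hb]
  | [A] => by simp [bigAnd]
  | A :: B :: l => by
      simp [bigAnd, ha, val_bigAnd v hb hn ha (B :: l)]

lemma val_bigOr (v : GRFormula → Bool) (hb : v bot = false)
    (hn : ∀ B, v (neg B) = !v B) (ha : ∀ B C, v (and B C) = (v B && v C)) :
    ∀ l, v (bigOr l) = l.any (fun A => v A)
  | [] => by simp [bigOr, hb]
  | [A] => by simp [bigOr]
  | A :: B :: l => by
      simp [bigOr, GRFormula.or, hn, ha, val_bigOr v hb hn ha (B :: l)]

lemma mp2 {a b c : GRFormula} (h : GRProof (impl a (impl b c)))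
    (h1 : GRProof a) (h2 : GRProof b) : GRProof c := (h.mp h1).mp h2

lemma orElim {a b c : GRFormula} (h1 : GRProof (impl a c))
    (h2 : GRProof (impl b c)) : GRProof (impl (GRFormula.or a b) c) := by
  refine mp2 (GRProof.taut ?_) h1 h2
  intro v hb hn ha
  simp only [GRFormula.impl, GRFormula.or, hn, ha]
  cases v a <;> cases v b <;> cases v c <;> simp

lemma orMono {x a c : GRFormula} (h : GRProof (impl a c)) :
    GRProof (impl (GRFormula.or x a) (GRFormula.or x c)) := by
  refine (GRProof.taut ?_).mp h
  intro v hb hn ha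
  simp only [GRFormula.impl, GRFormula.or, hn, ha]
  cases v a <;> cases v c <;> cases v x <;> simp

lemma boxMono {a b : GRFormula} (h : GRProof (impl a b)) :
    GRProof (impl (box a) (box b)) :=
  (GRProof.axK a b).mp (GRProof.nec h)

lemma taut_merge1 (Γ Δ Θ P : List GRFormula) :
    IsTaut (impl (impl (bigAnd Γ) (bigOr Δ))
      (impl (bigAnd (Γ ++ Θ)) (bigOr (Δ ++ P)))) := by
  intro v hb hn ha
  simp only [GRFormula.impl, hn, ha, val_bigAnd v hb hn ha, val_bigOr v hb hn ha,
    List.all_append, List.any_append]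
  cases hg : Γ.all (fun A => v A) <;> cases ht : Θ.all (fun A => v A) <;>
    cases hd : Δ.any (fun A => v A) <;> cases hp : P.any (fun A => v A) <;> simp

lemma taut_merge2 (Γ Δ Θ P : List GRFormula) :
    IsTaut (impl (impl (bigAnd Θ) (bigOr P))
      (impl (bigAnd (Γ ++ Θ)) (bigOr (Δ ++ P)))) := by
  intro v hb hn ha
  simp only [GRFormula.impl, hn, ha, val_bigAnd v hb hn ha, val_bigOr v hb hn ha,
    List.all_append, List.any_append]
  cases hg : Γ.all (fun A => v A) <;> cases ht : Θ.all (fun A => v A) <;>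
    cases hd : Δ.any (fun A => v A) <;> cases hp : P.any (fun A => v A) <;> simp

lemma seq1 (b : Bool) (Γ Δ Θ P : List GRFormula) :
    GRProof (impl (GRSequent.f ⟨b, Γ, Δ⟩) (GRSequent.f ⟨b, Γ ++ Θ, Δ ++ P⟩)) := by
  cases b with
  | false => exact GRProof.taut (taut_merge1 Γ Δ Θ P)
  | true => exact boxMono (GRProof.taut (taut_merge1 Γ Δ Θ P))

lemma seq2 (b : Bool) (Γ Δ Θ P : List GRFormula) :
    GRProof (impl (GRSequent.f ⟨b, Θ, P⟩) (GRSequent.f ⟨b, Γ ++ Θ, Δ ++ P⟩)) := by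
  cases b with
  | false => exact GRProof.taut (taut_merge2 Γ Δ Θ P)
  | true => exact boxMono (GRProof.taut (taut_merge2 Γ Δ Θ P))

lemma hyperF_cons (S : GRSequent) (l : List GRSequent) (h : l ≠ []) :
    hyperF (S :: l) = GRFormula.or S.f (hyperF l) := by
  cases l with
  | nil => exact absurd rfl h
  | cons T l' => rfl

lemma hyperImp (H : List GRSequent) {S1 S2 Sm : GRSequent}
    (h1 : GRProof (impl S1.f Sm.f)) (h2 : GRProof (impl S2.f Sm.f)) :
    GRProof (impl (hyperF (H ++ [S1, S2])) (hyperF (H ++ [Sm]))) := by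
  induction H with
  | nil =>
      simp only [List.nil_append]
      rw [hyperF_cons S1 [S2] (by simp)]
      exact orElim h1 h2
  | cons X H ih =>
      rw [List.cons_append, List.cons_append,
        hyperF_cons X _ (by simp), hyperF_cons X _ (by simp)]
      exact orMono ih

end GRMergeAux

theorem gr_merge_sound (H : List GRSequent) (b : Bool)
    (Γ Δ Θ Pi : List GRFormula)
    (h : GRProof (hyperF (H ++ [⟨b, Γ, Δ⟩, ⟨b, Θ, Pi⟩]))) :
    GRProof (hyperF (H ++ [⟨b, Γ ++ Θ, Δ ++ Pi⟩])) :=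
  (GRMergeAux.hyperImp H (GRMergeAux.seq1 b Γ Δ Θ Pi) (GRMergeAux.seq2 b Γ Δ Θ Pi)).mp h
end

section
/- Soundness of the GR hypersequent K-rule: if the GR Hilbert system derives H ∨ □((C ∧ G) ⊃ D), then it derives H ∨ ¬□C ∨ □(G ⊃ D). The analogous statements hold replacing the side hypothesis □C with ■C (using ■C ⊃ □C), with □C and conclusion premise □C (using □C ⊃ □□C), and with ■C and premise ■C (using ■C ⊃ □■C). -/
open GRFormula

section Aux
open GRFormula

lemma gr_imp_trans {A B C : GRFormula}
    (h1 : GRProof (impl A B)) (h2 : GRProof (impl B C)) :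
    GRProof (impl A C) := by
  have t : IsTaut (impl (impl A B) (impl (impl B C) (impl A C))) := by
    intro v _h0 hn ha
    simp only [GRFormula.impl, GRFormula.or, hn, ha]
    cases v A <;> cases v B <;> cases v C <;> simp
  exact (GRProof.taut t).mp h1 |>.mp h2

lemma gr_or_mono {H X Y : GRFormula}
    (h1 : GRProof (impl X Y)) (h2 : GRProof (or H X)) :
    GRProof (or H Y) := by
  have t : IsTaut (impl (impl X Y) (impl (or H X) (or H Y))) := by
    intro v _h0 hn ha
    simp only [GRFormula.impl, GRFormula.or, hn, ha]
    cases v H <;> cases v X <;> cases v Y <;> simp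
  exact (GRProof.taut t).mp h1 |>.mp h2

lemma gr_imp_to_or {P Q : GRFormula} :
    GRProof (impl (impl P Q) (or (neg P) Q)) := by
  apply GRProof.taut
  intro v _h0 hn ha
  simp only [GRFormula.impl, GRFormula.or, hn, ha]
  cases v P <;> cases v Q <;> simp

/-- □(A⊃B) from ⊢ A⊃B via nec + K, as implication from □A to □B. -/
lemma gr_box_mono {A B : GRFormula} (h : GRProof (impl A B)) :
    GRProof (impl (box A) (box B)) :=
  (GRProof.axK A B).mp h.nec

/-- Core step: □((C∧G)⊃D) ⊃ (□C ⊃ □(G⊃D)). -/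
lemma gr_core (C G D : GRFormula) :
    GRProof (impl (box (impl (and C G) D)) (impl (box C) (box (impl G D)))) := by
  have t : IsTaut (impl (impl (and C G) D) (impl C (impl G D))) := by
    intro v _h0 hn ha
    simp only [GRFormula.impl, GRFormula.or, hn, ha]
    cases v C <;> cases v G <;> cases v D <;> simp
  exact gr_imp_trans (gr_box_mono (GRProof.taut t)) (GRProof.axK C (impl G D))

/-- weaken antecedent: from P⊃Q and X⊃(Q⊃Z), get X⊃(P⊃Z). -/
lemma gr_ante {P Q X Z : GRFormula}
    (h1 : GRProof (impl P Q)) (h2 : GRProof (impl X (impl Q Z))) :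
    GRProof (impl X (impl P Z)) := by
  have t : IsTaut (impl (impl P Q) (impl (impl X (impl Q Z)) (impl X (impl P Z)))) := by
    intro v _h0 hn ha
    simp only [GRFormula.impl, GRFormula.or, hn, ha]
    cases v P <;> cases v Q <;> cases v X <;> cases v Z <;> simp
  exact ((GRProof.taut t).mp h1).mp h2

lemma gr_box_box (C : GRFormula) : GRProof (impl (box C) (box (box C))) :=
  gr_imp_trans (GRProof.axGGR C) (gr_box_mono (GRProof.axRG C))

lemma gr_rbox_box_rbox (C : GRFormula) : GRProof (impl (rbox C) (box (rbox C))) :=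
  gr_imp_trans (GRProof.axRG C) (GRProof.axGGR C)

end Aux

theorem gr_K_rule_sound (H C G D : GRFormula) :
    (GRProof (or H (box (impl (and C G) D))) →
      GRProof (or H (or (neg (box C)) (box (impl G D))))) ∧
    (GRProof (or H (box (impl (and C G) D))) →
      GRProof (or H (or (neg (rbox C)) (box (impl G D))))) ∧
    (GRProof (or H (box (impl (and (box C) G) D))) →
      GRProof (or H (or (neg (box C)) (box (impl G D))))) ∧
    (GRProof (or H (box (impl (and (rbox C) G) D))) →
      GRProof (or H (or (neg (rbox C)) (box (impl G D))))) := by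
  refine ⟨?_, ?_, ?_, ?_⟩
  · intro h
    exact gr_or_mono (gr_imp_trans (gr_core C G D) gr_imp_to_or) h
  · intro h
    have h1 := gr_or_mono (gr_imp_trans (gr_core C G D) gr_imp_to_or) h
    -- weaken ¬□C to ¬■C using ■C ⊃ □C
    have t : IsTaut (impl (impl (rbox C) (box C))
        (impl (or (neg (box C)) (box (impl G D)))
              (or (neg (rbox C)) (box (impl G D))))) := by
      intro v _h0 hn ha
      simp only [GRFormula.impl, GRFormula.or, hn, ha]
      cases v (rbox C) <;> cases v (box C) <;> cases v (box (impl G D)) <;> simp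
    exact gr_or_mono (((GRProof.taut t).mp (GRProof.axRG C))) h1
  · intro h
    have core := gr_ante (gr_box_box C) (gr_core (box C) G D)
    exact gr_or_mono (gr_imp_trans core gr_imp_to_or) h
  · intro h
    have core := gr_ante (gr_rbox_box_rbox C) (gr_core (rbox C) G D)
    exact gr_or_mono (gr_imp_trans core gr_imp_to_or) h
end
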